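/- Given adjoint pairs d₀ : V₀ → V₁, d₁ : V₁ → V₂ with d₁ ∘ d₀ = 0, the space V₁ decomposes as the orthogonal direct sum of the image of d₀, the image of δ₂ (adjoint of d₁), and the harmonic space ker d₁ ∩ ker δ₁ (Hodge decomposition). -/

import Mathlib

open RealInnerProductSpace

theorem hodge_decomposition
    {V₀ V₁ V₂ : Type*}
    [NormedAddCommGroup V₀] [InnerProductSpace ℝ V₀] [FiniteDimensional ℝ V₀]
    [NormedAddCommGroup V₁] [InnerProductSpace ℝ V₁] [FiniteDimensional ℝ V₁]
    [NormedAddCommGroup V₂] [InnerProductSpace ℝ V₂] [FiniteDimensional ℝ V₂]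
    (d₀ : V₀ →ₗ[ℝ] V₁) (d₁ : V₁ →ₗ[ℝ] V₂) (δ₁ : V₁ →ₗ[ℝ] V₀) (δ₂ : V₂ →ₗ[ℝ] V₁)
    (hadj₀ : ∀ (α : V₀) (β : V₁), ⟪d₀ α, β⟫ = ⟪α, δ₁ β⟫)
    (hadj₁ : ∀ (α : V₁) (β : V₂), ⟪d₁ α, β⟫ = ⟪α, δ₂ β⟫)
    (hcomplex : d₁ ∘ₗ d₀ = 0) :
    (LinearMap.range d₀ ⊔ LinearMap.range δ₂ ⊔ (LinearMap.ker d₁ ⊓ LinearMap.ker δ₁) = ⊤) ∧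
    (∀ x ∈ LinearMap.range d₀, ∀ y ∈ LinearMap.range δ₂, ⟪x, y⟫ = 0) ∧
    (∀ x ∈ LinearMap.range d₀, ∀ h ∈ LinearMap.ker d₁ ⊓ LinearMap.ker δ₁, ⟪x, h⟫ = 0) ∧
    (∀ y ∈ LinearMap.range δ₂, ∀ h ∈ LinearMap.ker d₁ ⊓ LinearMap.ker δ₁, ⟪y, h⟫ = 0) := by
  refine ⟨?_, ?_, ?_, ?_⟩
  · -- sup = top
    set K : Submodule ℝ V₁ := LinearMap.range d₀ ⊔ LinearMap.range δ₂ with hK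
    have hle : Kᗮ ≤ LinearMap.ker d₁ ⊓ LinearMap.ker δ₁ := by
      intro β hβ
      have h1 : ∀ x ∈ K, ⟪x, β⟫ = 0 := fun x hx => (Submodule.mem_orthogonal K β).mp hβ x hx
      constructor
      · -- d₁ β = 0
        have : ∀ γ : V₂, ⟪d₁ β, γ⟫ = 0 := by
          intro γ
          rw [hadj₁, real_inner_comm]
          exact h1 (δ₂ γ) (Submodule.mem_sup_right ⟨γ, rfl⟩)
        simpa using inner_self_eq_zero.mp (this (d₁ β)) -- membership
      · have : ∀ α : V₀, ⟪α, δ₁ β⟫ = 0 := by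
          intro α
          rw [← hadj₀]
          exact h1 (d₀ α) (Submodule.mem_sup_left ⟨α, rfl⟩)
        have := this (δ₁ β)
        simpa using inner_self_eq_zero.mp this
    have htop : K ⊔ Kᗮ = ⊤ := Submodule.sup_orthogonal_of_hasOrthogonalProjection
    rw [eq_top_iff, ← htop]
    exact sup_le_sup le_rfl hle
  · rintro x ⟨α, rfl⟩ y ⟨γ, rfl⟩
    have h := congrFun (congrArg DFunLike.coe hcomplex) α
    simp only [LinearMap.comp_apply, LinearMap.zero_apply] at h
    rw [← hadj₁, h, inner_zero_left]
  · rintro x ⟨α, rfl⟩ h ⟨_, hδ⟩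
    rw [hadj₀, hδ, inner_zero_right]
  · rintro y ⟨γ, rfl⟩ h ⟨hd, _⟩
    rw [real_inner_comm, ← hadj₁, LinearMap.mem_ker.mp hd, inner_zero_left]
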